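/- Splitting lemma: for a weak head context W and terms M, N of λ→m, the term W[(M; N)] weak-head reduces to ⋆ in exactly n steps if and only if there exist n₁, n₂ ≥ 0 with n = 1 + n₁ + n₂ such that M weak-head reduces to ⋆ in n₁ steps and W[N] weak-head reduces to ⋆ in n₂ steps. -/
import Mathlib


/-! The metacalculus λ→m for minimal logic: untyped λ-calculus extended with
a success constant ⋆, a guard construct (M; N), and generators ✠𝐚 / verifiers ⟨𝐚⟩
for atomic types. Terms use de Bruijn indices. -/

/-- Simple types: atomic types and arrows. -/
inductive Ty : Type
  | atom : ℕ → Ty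
  | arrow : Ty → Ty → Ty

/-- Metaterms of the metacalculus λ→m (de Bruijn indices). -/
inductive Tm : Type
  | var : ℕ → Tm
  | lam : Tm → Tm
  | app : Tm → Tm → Tm
  | star : Tm
  | guard : Tm → Tm → Tm
  | gen : ℕ → Tm
  | verif : ℕ → Tm → Tm

namespace Tm

/-- Shift de Bruijn indices ≥ c by d. -/
def shift (d c : ℕ) : Tm → Tm
  | var n => if n < c then var n else var (n + d)
  | lam M => lam (shift d (c+1) M)
  | app M N => app (shift d c M) (shift d c N)
  | star => star
  | guard M N => guard (shift d c M) (shift d c N)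
  | gen a => gen a
  | verif a M => verif a (shift d c M)

/-- Capture-avoiding substitution of the variable k by N. -/
def subst (k : ℕ) (N : Tm) : Tm → Tm
  | var n => if n = k then N else if k < n then var (n - 1) else var n
  | lam M => lam (subst (k+1) (shift 1 0 N) M)
  | app M P => app (subst k N M) (subst k N P)
  | star => star
  | guard M P => guard (subst k N M) (subst k N P)
  | gen a => gen a
  | verif a M => verif a (subst k N M)

/-- Pure metaterms: only variables, abstractions and applications. -/
def Pure : Tm → Prop
  | var _ => True
  | lam M => Pure M
  | app M N => Pure M ∧ Pure N
  | _ => False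

end Tm

/-- One-step reduction of λ→m, closed under arbitrary contexts. -/
inductive Step : Tm → Tm → Prop
  | beta (M N : Tm) : Step (.app (.lam M) N) (Tm.subst 0 N M)
  | guardStar (M : Tm) : Step (.guard .star M) M
  | verifGen (a : ℕ) : Step (.verif a (.gen a)) .star
  | lam {M M'} : Step M M' → Step (.lam M) (.lam M')
  | appL {M M'} (N) : Step M M' → Step (.app M N) (.app M' N)
  | appR {N N'} (M) : Step N N' → Step (.app M N) (.app M N')
  | guardL {M M'} (N) : Step M M' → Step (.guard M N) (.guard M' N)
  | guardR {N N'} (M) : Step N N' → Step (.guard M N) (.guard M N')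
  | verif {M M'} (a) : Step M M' → Step (.verif a M) (.verif a M')

/-- Weak head reduction of λ→m: the rules closed under weak head contexts only. -/
inductive WStep : Tm → Tm → Prop
  | beta (M N : Tm) : WStep (.app (.lam M) N) (Tm.subst 0 N M)
  | guardStar (M : Tm) : WStep (.guard .star M) M
  | verifGen (a : ℕ) : WStep (.verif a (.gen a)) .star
  | appL {M M'} (N) : WStep M M' → WStep (.app M N) (.app M' N)
  | guardL {M M'} (N) : WStep M M' → WStep (.guard M N) (.guard M' N)
  | verif {M M'} (a) : WStep M M' → WStep (.verif a M) (.verif a M')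

/-- β-reduction alone, closed under arbitrary contexts. -/
inductive BStep : Tm → Tm → Prop
  | beta (M N : Tm) : BStep (.app (.lam M) N) (Tm.subst 0 N M)
  | lam {M M'} : BStep M M' → BStep (.lam M) (.lam M')
  | appL {M M'} (N) : BStep M M' → BStep (.app M N) (.app M' N)
  | appR {N N'} (M) : BStep N N' → BStep (.app M N) (.app M N')
  | guardL {M M'} (N) : BStep M M' → BStep (.guard M N) (.guard M' N)
  | guardR {N N'} (M) : BStep N N' → BStep (.guard M N) (.guard M N')
  | verif {M M'} (a) : BStep M M' → BStep (.verif a M) (.verif a M')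

mutual
/-- The generator ✠A for an arbitrary simple type A. -/
def genT : Ty → Tm
  | .atom a => .gen a
  | .arrow A B => .lam (.guard (verifT A (.var 0)) (genT B))
/-- The verifier ⟨A⟩M for an arbitrary simple type A applied to M. -/
def verifT : Ty → Tm → Tm
  | .atom a, M => .verif a M
  | .arrow A B, M => verifT B (.app M (genT A))
end



/-- Weak head contexts W ::= □ | W M | (W; M) | ⟨𝐚⟩W. -/
inductive WCtx : Type
  | hole : WCtx
  | app : WCtx → Tm → WCtx
  | guard : WCtx → Tm → WCtx
  | verif : ℕ → WCtx → WCtx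

/-- Plugging a term into the hole of a weak head context. -/
def WCtx.plug : WCtx → Tm → Tm
  | .hole, M => M
  | .app W N, M => .app (W.plug M) N
  | .guard W N, M => .guard (W.plug M) N
  | .verif a W, M => .verif a (W.plug M)

/-- n-step weak head reduction. -/
inductive WStepN : ℕ → Tm → Tm → Prop
  | refl (M : Tm) : WStepN 0 M M
  | head {M N P : Tm} {n : ℕ} : WStep M N → WStepN n N P → WStepN (n+1) M P

lemma plug_wstep (W : WCtx) {X Y : Tm} (h : WStep X Y) :
    WStep (W.plug X) (W.plug Y) := by
  induction W with
  | hole => exact h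
  | app W P ih => exact .appL P ih
  | guard W P ih => exact .guardL P ih
  | verif a W ih => exact .verif a ih

lemma plug_guard_ne_star (W : WCtx) (M N : Tm) : W.plug (.guard M N) ≠ .star := by
  cases W <;> simp [WCtx.plug]

lemma plug_guard_ne_lam (W : WCtx) (M N M₀ : Tm) : W.plug (.guard M N) ≠ .lam M₀ := by
  cases W <;> simp [WCtx.plug]

lemma plug_guard_ne_gen (W : WCtx) (M N : Tm) (a : ℕ) : W.plug (.guard M N) ≠ .gen a := by
  cases W <;> simp [WCtx.plug]

lemma wstepN_zero {M P : Tm} (h : WStepN 0 M P) : M = P := by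
  cases h; rfl

lemma wstepN_succ {n : ℕ} {M P : Tm} (h : WStepN (n+1) M P) :
    ∃ Q, WStep M Q ∧ WStepN n Q P := by
  cases h with
  | head s h' => exact ⟨_, s, h'⟩

lemma wstep_plug_guard_inv (W : WCtx) (M N Q : Tm)
    (h : WStep (W.plug (.guard M N)) Q) :
    (M = .star ∧ Q = W.plug N) ∨ ∃ M', WStep M M' ∧ Q = W.plug (.guard M' N) := by
  induction W generalizing Q with
  | hole =>
    generalize hT : Tm.guard M N = T at h
    cases h with
    | beta M₀ N₀ => exact absurd hT.symm (by simp)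
    | verifGen a => exact absurd hT.symm (by simp)
    | appL _ h' => exact absurd hT.symm (by simp)
    | verif _ h' => exact absurd hT.symm (by simp)
    | guardStar =>
      cases hT
      exact Or.inl ⟨rfl, rfl⟩
    | guardL _ h' =>
      cases hT
      exact Or.inr ⟨_, h', rfl⟩
  | app W P ih =>
    simp only [WCtx.plug] at h
    generalize hT : W.plug (.guard M N) = T at h
    cases h with
    | beta M₀ N₀ => exact absurd hT (plug_guard_ne_lam W M N M₀)
    | appL _ h' =>
      subst hT
      rcases ih _ h' with ⟨h1, h2⟩ | ⟨M', hs, h2⟩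
      · exact Or.inl ⟨h1, by simp [WCtx.plug, h2]⟩
      · exact Or.inr ⟨M', hs, by simp [WCtx.plug, h2]⟩
  | guard W P ih =>
    simp only [WCtx.plug] at h
    generalize hT : W.plug (.guard M N) = T at h
    cases h with
    | guardStar => exact absurd hT (plug_guard_ne_star W M N)
    | guardL _ h' =>
      subst hT
      rcases ih _ h' with ⟨h1, h2⟩ | ⟨M', hs, h2⟩
      · exact Or.inl ⟨h1, by simp [WCtx.plug, h2]⟩
      · exact Or.inr ⟨M', hs, by simp [WCtx.plug, h2]⟩
  | verif a W ih =>
    simp only [WCtx.plug] at h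
    generalize hT : W.plug (.guard M N) = T at h
    cases h with
    | verifGen => exact absurd hT (plug_guard_ne_gen W M N a)
    | verif _ h' =>
      subst hT
      rcases ih _ h' with ⟨h1, h2⟩ | ⟨M', hs, h2⟩
      · exact Or.inl ⟨h1, by simp [WCtx.plug, h2]⟩
      · exact Or.inr ⟨M', hs, by simp [WCtx.plug, h2]⟩

lemma splitting_bwd (W : WCtx) (N : Tm) {n₁ : ℕ} {M : Tm} (h1 : WStepN n₁ M .star) :
    ∀ n₂, WStepN n₂ (W.plug N) .star → WStepN (1 + n₁ + n₂) (W.plug (.guard M N)) .star := by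
  induction n₁ generalizing M with
  | zero =>
    intro n₂ h2
    have e := wstepN_zero h1
    subst e
    have e : 1 + 0 + n₂ = n₂ + 1 := by omega
    rw [e]
    exact .head (plug_wstep W (.guardStar N)) h2
  | succ n ih =>
    intro n₂ h2
    obtain ⟨Q, s, h'⟩ := wstepN_succ h1
    have e : 1 + (n + 1) + n₂ = (1 + n + n₂) + 1 := by omega
    rw [e]
    exact .head (plug_wstep W (.guardL N s)) (ih h' n₂ h2)

lemma splitting_fwd (W : WCtx) (N : Tm) :
    ∀ n M, WStepN n (W.plug (.guard M N)) .star →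
      ∃ n₁ n₂ : ℕ, n = 1 + n₁ + n₂ ∧ WStepN n₁ M .star ∧ WStepN n₂ (W.plug N) .star := by
  intro n
  induction n with
  | zero =>
    intro M h
    exact absurd (wstepN_zero h) (plug_guard_ne_star W M N)
  | succ n ih =>
    intro M h
    obtain ⟨Q, s, h'⟩ := wstepN_succ h
    rcases wstep_plug_guard_inv W M N _ s with ⟨h1, h2⟩ | ⟨M', hs, h2⟩
    · subst h1; subst h2
      exact ⟨0, n, by omega, .refl _, h'⟩
    · subst h2
      rcases ih M' h' with ⟨n₁, n₂, hn, hM, hN⟩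
      exact ⟨n₁ + 1, n₂, by omega, .head hs hM, hN⟩

/-- Splitting: W[(M; N)] weak-head reduces to ⋆ in exactly n steps
iff there are n₁, n₂ with n = 1 + n₁ + n₂, M →w^{n₁} ⋆ and W[N] →w^{n₂} ⋆. -/
theorem splitting (W : WCtx) (M N : Tm) (n : ℕ) :
    WStepN n (W.plug (.guard M N)) .star ↔
      ∃ n₁ n₂ : ℕ, n = 1 + n₁ + n₂ ∧ WStepN n₁ M .star ∧ WStepN n₂ (W.plug N) .star := by
  constructor
  · exact splitting_fwd W N n M
  · rintro ⟨n₁, n₂, rfl, hM, hN⟩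
    exact splitting_bwd W N hM n₂ hN
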